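/- For x, y ∈ the unit ball B^d with A(x) := √(1−‖x‖₂²) and ρ(x,y) := arccos(⟨x,y⟩ + A(x)A(y)), one has |A(x) − A(y)| ≤ √2 · ρ(x,y). -/

import Mathlib

open Real

/-- On the unit ball `B^d`, with `A(x) = √(1-‖x‖²)` and
`ρ(x,y) = arccos(⟨x,y⟩ + A(x)A(y))`, one has `|A(x) - A(y)| ≤ √2 ρ(x,y)`. -/
theorem stmt14 (d : ℕ) (x y : EuclideanSpace ℝ (Fin d))
    (hx : ‖x‖ ≤ 1) (hy : ‖y‖ ≤ 1) :
    |Real.sqrt (1 - ‖x‖ ^ 2) - Real.sqrt (1 - ‖y‖ ^ 2)| ≤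
      Real.sqrt 2 *
        Real.arccos ((inner ℝ x y : ℝ) +
          Real.sqrt (1 - ‖x‖ ^ 2) * Real.sqrt (1 - ‖y‖ ^ 2)) := by
  set a := ‖x‖ with ha
  set b := ‖y‖ with hb
  set A := Real.sqrt (1 - a ^ 2) with hA
  set B := Real.sqrt (1 - b ^ 2) with hB
  have ha0 : (0:ℝ) ≤ a := norm_nonneg x
  have hb0 : (0:ℝ) ≤ b := norm_nonneg y
  have hA2 : A ^ 2 = 1 - a ^ 2 := Real.sq_sqrt (by nlinarith)
  have hB2 : B ^ 2 = 1 - b ^ 2 := Real.sq_sqrt (by nlinarith)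
  have hA0 : 0 ≤ A := Real.sqrt_nonneg _
  have hB0 : 0 ≤ B := Real.sqrt_nonneg _
  set t : ℝ := (inner ℝ x y : ℝ) + A * B with htdef
  have hxy : |(inner ℝ x y : ℝ)| ≤ a * b := abs_real_inner_le_norm x y
  have hxy1 : (inner ℝ x y : ℝ) ≤ a * b := (abs_le.mp hxy).2
  have hxy2 : -(a * b) ≤ (inner ℝ x y : ℝ) := (abs_le.mp hxy).1
  have ht1 : t ≤ 1 := by nlinarith [sq_nonneg (a * B - b * A), sq_nonneg (a - b), sq_nonneg (A - B)]
  have ht2 : -1 ≤ t := by nlinarith [mul_nonneg ha0 hb0, mul_nonneg hA0 hB0]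
  have hcos : Real.cos (Real.arccos t) = t := Real.cos_arccos ht2 ht1
  set ρ := Real.arccos t with hρ
  have hρ0 : 0 ≤ ρ := Real.arccos_nonneg t
  -- ‖x - y‖² ≥ 0 gives (A - B)² ≤ 2 - 2t
  have hns : ‖x - y‖ ^ 2 = a ^ 2 - 2 * (inner ℝ x y : ℝ) + b ^ 2 := by
    rw [norm_sub_sq_real]
  have hkey : (A - B) ^ 2 ≤ 2 - 2 * t := by
    nlinarith [sq_nonneg (‖x - y‖)]
  have hcb : 2 - 2 * t ≤ ρ ^ 2 := by
    have h := Real.one_sub_sq_div_two_le_cos (x := ρ)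
    linarith [hcos.le, hcos.ge]
  have h1 : |A - B| ≤ ρ := by
    rw [← Real.sqrt_sq_eq_abs]
    calc Real.sqrt ((A - B) ^ 2) ≤ Real.sqrt (ρ ^ 2) :=
          Real.sqrt_le_sqrt (by linarith)
      _ = ρ := Real.sqrt_sq hρ0
  have h2 : (1:ℝ) ≤ Real.sqrt 2 := by
    rw [show (1:ℝ) = Real.sqrt 1 from Real.sqrt_one.symm]
    exact Real.sqrt_le_sqrt (by norm_num)
  nlinarith [h1, h2, hρ0]
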